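/- Let V ⊂ ℝ be a finite set of points on the line with search costs c_i ∈ ℕ, priors p_i, false-negative probabilities β_i, and budget T. For every schedule there exists a schedule of weight at most that of the original which searches each point the same number of times and visits points monotonically from left to right (from the leftmost visited point to the rightmost); consequently, there exists an optimal schedule ψ* for the 1D problem such that ψ*(t_1) ≤ ψ*(t_2) whenever t_1 ≤ t_2. -/

import Mathlib

open Finset

/-- Weight of a 1D schedule: a repeated point is a search step (cost `c`),
a move between distinct points costs the distance between them. -/
def weight1D {n : ℕ} (v : Fin n → ℝ) (c : Fin n → ℕ) : List (Fin n) → ℝ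
  | [] => 0
  | [_] => 0
  | a :: b :: l => (if a = b then (c a : ℝ) else |v a - v b|) + weight1D v c (b :: l)

/-- Number of search steps at point `i`. -/
def searchCount1D {n : ℕ} (i : Fin n) : List (Fin n) → ℕ
  | a :: b :: l => (if a = b ∧ b = i then 1 else 0) + searchCount1D i (b :: l)
  | _ => 0

section Aux
variable {n : ℕ} (v : Fin n → ℝ) (c : Fin n → ℕ)

lemma cost_nonneg (a b : Fin n) : 0 ≤ (if a = b then (c a : ℝ) else |v a - v b|) := by
  split
  · positivity
  · exact abs_nonneg _

lemma weight1D_nonneg : ∀ l, 0 ≤ weight1D v c l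
  | [] => le_refl 0
  | [_] => le_refl 0
  | a :: b :: l => by
      have h1 := weight1D_nonneg (b :: l)
      have h2 := cost_nonneg v c a b
      simp only [weight1D]
      linarith

lemma weight1D_cons_le (x : Fin n) : ∀ l, weight1D v c l ≤ weight1D v c (x :: l)
  | [] => le_refl 0
  | b :: l => by
      have h2 := cost_nonneg v c x b
      simp only [weight1D]
      linarith

lemma weight1D_decomp : ∀ l, weight1D v c l
    = (∑ j, (searchCount1D j l : ℝ) * c j) + weight1D v (fun _ => 0) l
  | [] => by simp [weight1D, searchCount1D]
  | [a] => by simp [weight1D, searchCount1D]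
  | a :: b :: l => by
      have ih := weight1D_decomp (b :: l)
      have hsplit : (∑ j, ((searchCount1D j (a :: b :: l) : ℝ)) * c j)
          = (if a = b then (c b : ℝ) else 0)
            + ∑ j, (searchCount1D j (b :: l) : ℝ) * c j := by
        have h1 : ∀ j ∈ Finset.univ, ((searchCount1D j (a :: b :: l) : ℝ)) * c j
            = (if a = b ∧ b = j then (c j : ℝ) else 0)
              + (searchCount1D j (b :: l) : ℝ) * c j := by
          intro j _
          simp only [searchCount1D]
          push_cast
          by_cases h : a = b ∧ b = j <;> simp [h] <;> ring
        rw [Finset.sum_congr rfl h1, Finset.sum_add_distrib]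
        congr 1
        by_cases hab : a = b
        · simp [hab]
        · simp [hab]
      simp only [weight1D, ih, hsplit, Nat.cast_zero]
      by_cases hab : a = b
      · subst hab; simp only [if_pos trivial]; ring
      · simp only [if_neg hab]; ring

lemma move_head : ∀ (t : List (Fin n)) (x a : Fin n), a ∈ x :: t →
    |v x - v a| ≤ weight1D v (fun _ => 0) (x :: t)
  | [], x, a, h => by
      simp only [List.mem_singleton] at h
      subst h
      simp [weight1D]
  | y :: t, x, a, h => by
      have hw := weight1D_nonneg v (fun _ => 0) (x :: y :: t)
      rcases List.mem_cons.mp h with rfl | h'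
      · simpa using hw
      · have ih := move_head t y a h'
        have htri : |v x - v a| ≤ |v x - v y| + |v y - v a| := abs_sub_le _ _ _
        by_cases hxy : x = y
        · subst hxy
          simp only [weight1D, if_pos rfl, Nat.cast_zero, zero_add]
          simpa using ih
        · simp only [weight1D, if_neg hxy]
          have hsub : |v x - v y| - v x + v y = |v x - v y| - v x + v y := rfl
          linarith

lemma move_pair : ∀ (l : List (Fin n)) (a b : Fin n), a ∈ l → b ∈ l →
    |v a - v b| ≤ weight1D v (fun _ => 0) l
  | [], a, b, ha, hb => by simp at ha
  | x :: t, a, b, ha, hb => by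
      rcases List.mem_cons.mp ha with rfl | ha'
      · exact move_head v t a b hb
      · rcases List.mem_cons.mp hb with rfl | hb'
        · rw [abs_sub_comm]
          exact move_head v t b a ha
        · exact le_trans (move_pair t a b ha' hb')
            (weight1D_cons_le v (fun _ => 0) x t)

lemma searchCount_ne_zero_mem : ∀ (l : List (Fin n)) (i : Fin n),
    searchCount1D i l ≠ 0 → i ∈ l
  | [], i, h => by simp [searchCount1D] at h
  | [a], i, h => by simp [searchCount1D] at h
  | a :: b :: l, i, h => by
      simp only [searchCount1D] at h
      by_cases hab : a = b ∧ b = i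
      · simp [hab.2]
      · rw [if_neg hab, zero_add] at h
        exact List.mem_cons_of_mem a (searchCount_ne_zero_mem (b :: l) i h)

lemma weight_rep_nil (i : Fin n) : ∀ k, weight1D v c (List.replicate (k + 1) i) = k * c i
  | 0 => by simp [weight1D]
  | (k + 1) => by
      have ih := weight_rep_nil i k
      rw [List.replicate_succ, List.replicate_succ]
      rw [show weight1D v c (i :: i :: List.replicate k i)
          = (if i = i then (c i : ℝ) else |v i - v i|) + weight1D v c (i :: List.replicate k i)
          from rfl]
      rw [if_pos rfl, ← List.replicate_succ, ih]
      push_cast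
      ring

lemma weight_rep_cons (i h : Fin n) (t : List (Fin n)) :
    ∀ k, weight1D v c (List.replicate (k + 1) i ++ h :: t)
      = k * c i + ((if i = h then (c i : ℝ) else |v i - v h|) + weight1D v c (h :: t))
  | 0 => by
      rw [show List.replicate 1 i ++ h :: t = i :: h :: t from rfl]
      rw [show weight1D v c (i :: h :: t)
          = (if i = h then (c i : ℝ) else |v i - v h|) + weight1D v c (h :: t) from rfl]
      push_cast
      ring
  | (k + 1) => by
      have ih := weight_rep_cons i h t k
      rw [List.replicate_succ, List.replicate_succ, List.cons_append, List.cons_append]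
      rw [show weight1D v c (i :: i :: (List.replicate k i ++ h :: t))
          = (if i = i then (c i : ℝ) else |v i - v i|)
            + weight1D v c (i :: (List.replicate k i ++ h :: t)) from rfl]
      rw [if_pos rfl, ← List.cons_append, ← List.replicate_succ, ih]
      push_cast
      ring

lemma count_rep_nil (i j : Fin n) : ∀ k, searchCount1D j (List.replicate (k + 1) i)
      = if j = i then k else 0
  | 0 => by
      rw [show searchCount1D j (List.replicate 1 i) = 0 from rfl, ite_self]
  | (k + 1) => by
      have ih := count_rep_nil i j k
      rw [List.replicate_succ, List.replicate_succ]
      rw [show searchCount1D j (i :: i :: List.replicate k i)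
          = (if i = i ∧ i = j then 1 else 0) + searchCount1D j (i :: List.replicate k i)
          from rfl]
      rw [← List.replicate_succ, ih]
      by_cases hji : j = i
      · simp [hji]; omega
      · simp only [hji, if_neg hji, true_and, if_false]
        have : ¬ i = j := fun hij => hji hij.symm
        simp [this]

lemma count_rep_cons (i h j : Fin n) (t : List (Fin n)) :
    ∀ k, searchCount1D j (List.replicate (k + 1) i ++ h :: t)
      = (if j = i then k else 0) + ((if i = h ∧ h = j then 1 else 0) + searchCount1D j (h :: t))
  | 0 => by
      rw [show List.replicate 1 i ++ h :: t = i :: h :: t from rfl]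
      rw [show searchCount1D j (i :: h :: t)
          = (if i = h ∧ h = j then 1 else 0) + searchCount1D j (h :: t) from rfl]
      rw [ite_self, Nat.zero_add]
  | (k + 1) => by
      have ih := count_rep_cons i h j t k
      rw [List.replicate_succ, List.replicate_succ, List.cons_append, List.cons_append]
      rw [show searchCount1D j (i :: i :: (List.replicate k i ++ h :: t))
          = (if i = i ∧ i = j then 1 else 0)
            + searchCount1D j (i :: (List.replicate k i ++ h :: t)) from rfl]
      rw [← List.cons_append, ← List.replicate_succ, ih]
      by_cases hji : j = i
      · simp [hji]; omega
      · simp only [hji, if_neg hji, true_and, if_false]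
        have : ¬ i = j := fun hij => hji hij.symm
        simp [this]

lemma chain_rep (i : Fin n) : ∀ k, List.Chain' (· ≤ ·) (List.replicate k i)
  | 0 => by simp [List.Chain']
  | 1 => by simp [List.Chain']
  | (k + 2) => by
      rw [List.replicate_succ]
      refine List.isChain_cons.mpr ⟨?_, chain_rep i (k + 1)⟩
      intro y hy
      rw [List.replicate_succ, List.head?_cons, Option.mem_some_iff] at hy
      exact le_of_eq hy

lemma getLast?_rep (i : Fin n) : ∀ k, (List.replicate (k + 1) i).getLast? = some i
  | 0 => rfl
  | (k + 1) => by
      rw [List.replicate_succ, List.replicate_succ, List.getLast?_cons_cons,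
        ← List.replicate_succ, getLast?_rep i k]

/-- Canonical monotone schedule for search counts `b` on an index list. -/
def sched {n : ℕ} (b : Fin n → ℕ) (is : List (Fin n)) : List (Fin n) :=
  is.flatMap fun i => List.replicate (b i + 1) i

lemma sched_nil (b : Fin n → ℕ) : sched b ([] : List (Fin n)) = [] := rfl

lemma sched_cons (b : Fin n → ℕ) (i : Fin n) (is : List (Fin n)) :
    sched b (i :: is) = List.replicate (b i + 1) i ++ sched b is := by
  simp [sched]

lemma sched_spec (hv : StrictMono v) (b : Fin n → ℕ) :
    ∀ (is : List (Fin n)) (i : Fin n), List.Pairwise (· < ·) (i :: is) →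
      List.Chain' (· ≤ ·) (sched b (i :: is)) ∧
      (∀ j, searchCount1D j (sched b (i :: is)) = if j ∈ i :: is then b j else 0) ∧
      weight1D v c (sched b (i :: is)) =
        (∑ j ∈ (i :: is).toFinset, (b j : ℝ) * c j)
          + (v ((i :: is).getLast (List.cons_ne_nil i is)) - v i)
  | [], i, _ => by
      constructor
      · rw [sched_cons, sched_nil, List.append_nil]
        exact chain_rep i (b i + 1)
      constructor
      · intro j
        rw [sched_cons, sched_nil, List.append_nil, count_rep_nil]
        by_cases hj : j = i
        · simp [hj]
        · simp [hj]
      · rw [sched_cons, sched_nil, List.append_nil, weight_rep_nil]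
        simp
  | (i2 :: is'), i, hsort => by
      obtain ⟨hlt, hsort'⟩ := List.pairwise_cons.mp hsort
      have hi2 : i < i2 := hlt i2 (List.mem_cons_self)
      have ih := sched_spec hv b is' i2 hsort'
      have hform : sched b (i2 :: is') = i2 :: (List.replicate (b i2) i2 ++ sched b is') := by
        rw [sched_cons, List.replicate_succ, List.cons_append]
      have hne : i ≠ i2 := ne_of_lt hi2
      have hinot : i ∉ i2 :: is' := fun hmem => absurd (hlt i hmem) (lt_irrefl i)
      refine ⟨?_, ?_, ?_⟩
      · -- chain
        rw [sched_cons]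
        refine List.isChain_append.mpr ⟨chain_rep i (b i + 1), ih.1, ?_⟩
        intro x hx y hy
        rw [getLast?_rep, Option.mem_some_iff] at hx
        rw [hform, List.head?_cons, Option.mem_some_iff] at hy
        rw [← hx, ← hy]
        exact le_of_lt hi2
      · -- counts
        intro j
        rw [sched_cons, hform, count_rep_cons, ← hform, ih.2.1 j]
        have hmid : ¬(i = i2 ∧ i2 = j) := fun hc => hne hc.1
        rw [if_neg hmid, Nat.zero_add]
        by_cases hj : j = i
        · subst hj
          rw [if_pos rfl, if_neg hinot, if_pos (List.mem_cons_self), Nat.add_zero]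
        · rw [if_neg hj]
          rw [Nat.zero_add]
          by_cases hj2 : j ∈ i2 :: is'
          · rw [if_pos hj2, if_pos (List.mem_cons_of_mem i hj2)]
          · rw [if_neg hj2, if_neg (by
              intro hmem
              rcases List.mem_cons.mp hmem with h1 | h1
              · exact hj h1
              · exact hj2 h1)]
      · -- weight
        rw [sched_cons, hform, weight_rep_cons, ← hform, ih.2.2]
        rw [if_neg hne]
        have habs : |v i - v i2| = v i2 - v i := by
          rw [abs_sub_comm]
          exact abs_of_nonneg (by linarith [hv hi2])
        rw [habs]
        have hlast : (i :: i2 :: is').getLast (List.cons_ne_nil i (i2 :: is'))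
            = (i2 :: is').getLast (List.cons_ne_nil i2 is') := by
          rw [List.getLast_cons (List.cons_ne_nil i2 is')]
        rw [hlast]
        have htf : (i :: i2 :: is').toFinset = insert i (i2 :: is').toFinset := by
          simp
        rw [htf, Finset.sum_insert (by simpa using hinot)]
        ring

/-- Support of a count vector, as a sorted list. -/
def supp {n : ℕ} (b : Fin n → ℕ) : List (Fin n) :=
  (List.finRange n).filter (fun i => b i != 0)

lemma mem_supp {b : Fin n → ℕ} {i : Fin n} : i ∈ supp b ↔ b i ≠ 0 := by
  simp [supp, List.mem_filter]

lemma supp_sorted (b : Fin n → ℕ) : List.Pairwise (· < ·) (supp b) :=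
  (List.pairwise_lt_finRange n).sublist List.filter_sublist

lemma sched_supp (hv : StrictMono v) (b : Fin n → ℕ) :
    List.Chain' (· ≤ ·) (sched b (supp b)) ∧
    (∀ j, searchCount1D j (sched b (supp b)) = b j) ∧
    (∀ ψ : List (Fin n), (∀ j, searchCount1D j ψ = b j) →
      weight1D v c (sched b (supp b)) ≤ weight1D v c ψ) := by
  rcases hsupp : supp b with _ | ⟨i, is⟩
  · refine ⟨by simp [sched_nil, List.Chain'], ?_, ?_⟩
    · intro j
      have hj : b j = 0 := by
        by_contra hne
        have : j ∈ supp b := mem_supp.mpr hne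
        rw [hsupp] at this
        simp at this
      rw [sched_nil, hj]
      rfl
    · intro ψ _
      rw [sched_nil, show weight1D v c [] = 0 from rfl]
      exact weight1D_nonneg v c ψ
  · have hsort : List.Pairwise (· < ·) (i :: is) := hsupp ▸ supp_sorted b
    obtain ⟨hchain, hcount, hweight⟩ := sched_spec v c hv b is i hsort
    have hbz : ∀ j, j ∉ i :: is → b j = 0 := by
      intro j hj
      by_contra hne
      exact hj (hsupp ▸ mem_supp.mpr hne)
    refine ⟨hchain, ?_, ?_⟩
    · intro j
      rw [hcount j]
      by_cases hj : j ∈ i :: is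
      · rw [if_pos hj]
      · rw [if_neg hj, hbz j hj]
    · intro ψ hψ
      rw [hweight]
      have hsum : (∑ j ∈ (i :: is).toFinset, (b j : ℝ) * c j)
          = ∑ j, (b j : ℝ) * c j := by
        refine Finset.sum_subset (Finset.subset_univ _) ?_
        intro j _ hj
        rw [hbz j (by simpa using hj)]
        simp
      have hdec := weight1D_decomp v c ψ
      have hcnt : ∀ j, (searchCount1D j ψ : ℝ) = (b j : ℝ) := fun j => by rw [hψ j]
      rw [Finset.sum_congr rfl (fun j _ => by rw [hcnt j])] at hdec
      -- the endpoints are visited by ψ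
      have hmemi : i ∈ ψ := by
        apply searchCount_ne_zero_mem ψ i
        rw [hψ i]
        apply mem_supp.mp
        rw [hsupp]
        exact List.mem_cons_self
      have hlast_mem : (i :: is).getLast (List.cons_ne_nil i is) ∈ ψ := by
        apply searchCount_ne_zero_mem ψ _
        rw [hψ _]
        apply mem_supp.mp
        rw [hsupp]
        exact List.getLast_mem (List.cons_ne_nil i is)
      have hmove : v ((i :: is).getLast (List.cons_ne_nil i is)) - v i
          ≤ weight1D v (fun _ => 0) ψ :=
        le_trans (le_abs_self _) (move_pair v ψ _ _ hlast_mem hmemi)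
      rw [hsum, hdec]
      linarith

end Aux

/-- In 1D, every schedule can be replaced by a left-to-right (monotone)
schedule of at most the same weight searching each point the same number of
times; consequently there is an optimal monotone schedule. -/
theorem oneD_monotone_optimal (n : ℕ) (v : Fin n → ℝ) (hv : StrictMono v)
    (c : Fin n → ℕ) (hc : ∀ i, 1 ≤ c i)
    (p β : Fin n → ℝ) (hp : ∀ i, 0 ≤ p i) (hsum : ∑ i, p i = 1)
    (hβ : ∀ i, 0 ≤ β i ∧ β i < 1) (T : ℝ) (hT : 0 ≤ T) :
    (∀ ψ : List (Fin n), ∃ ψ' : List (Fin n),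
        weight1D v c ψ' ≤ weight1D v c ψ ∧
        (∀ i, searchCount1D i ψ' = searchCount1D i ψ) ∧
        ψ'.Chain' (· ≤ ·)) ∧
    (∃ ψs : List (Fin n), weight1D v c ψs ≤ T ∧ ψs.Chain' (· ≤ ·) ∧
        ∀ ψ : List (Fin n), weight1D v c ψ ≤ T →
          ∑ i, (1 - β i ^ searchCount1D i ψ) * p i
            ≤ ∑ i, (1 - β i ^ searchCount1D i ψs) * p i) := by

  classical
  constructor
  · intro ψ
    set b : Fin n → ℕ := fun i => searchCount1D i ψ with hb
    obtain ⟨h1, h2, h3⟩ := sched_supp v c hv b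
    exact ⟨sched b (supp b), h3 ψ (fun j => rfl), h2, h1⟩
  · set N := ⌊T⌋₊ with hN
    set S : Finset (Fin n → ℕ) :=
      ((Finset.univ : Finset (Fin n → Fin (N + 1))).image (fun f i => (f i : ℕ))).filter
        (fun b => weight1D v c (sched b (supp b)) ≤ T) with hS
    have hzero : (fun _ => 0 : Fin n → ℕ) ∈ S := by
      rw [hS, Finset.mem_filter]
      constructor
      · refine Finset.mem_image.mpr ⟨fun _ => (⟨0, Nat.succ_pos N⟩ : Fin (N + 1)),
          Finset.mem_univ _, ?_⟩
        funext i
        rfl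
      · have hsupp0 : supp (fun _ => (0 : ℕ) : Fin n → ℕ) = [] := by
          simp [supp]
        rw [hsupp0, sched_nil]
        exact hT
    obtain ⟨bs, hbsS, hbsmax⟩ := Finset.exists_max_image S
      (fun b => ∑ i, (1 - β i ^ (b i)) * p i) ⟨_, hzero⟩
    obtain ⟨hchain, hcount, hwle⟩ := sched_supp v c hv bs
    refine ⟨sched bs (supp bs), (Finset.mem_filter.mp hbsS).2, hchain, ?_⟩
    intro ψ hψT
    set b : Fin n → ℕ := fun i => searchCount1D i ψ with hb
    obtain ⟨h1, h2, h3⟩ := sched_supp v c hv b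
    have hwψ : weight1D v c (sched b (supp b)) ≤ T := le_trans (h3 ψ (fun j => rfl)) hψT
    -- each b i is at most N
    have hbound : ∀ i, b i ≤ N := by
      intro i
      have hdec := weight1D_decomp v c ψ
      have hmv : 0 ≤ weight1D v (fun _ => 0) ψ := weight1D_nonneg v _ ψ
      have hterm : (b i : ℝ) * 1 ≤ (searchCount1D i ψ : ℝ) * c i := by
        apply mul_le_mul_of_nonneg_left _ (by positivity)
        exact_mod_cast hc i
      have hsingle : (searchCount1D i ψ : ℝ) * c i
          ≤ ∑ j, (searchCount1D j ψ : ℝ) * c j := by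
        apply Finset.single_le_sum (fun j _ => by positivity) (Finset.mem_univ i)
      have : (b i : ℝ) ≤ T := by
        have := hterm.trans hsingle
        rw [mul_one] at this
        linarith
      exact Nat.le_floor this
    have hbS : b ∈ S := by
      rw [hS, Finset.mem_filter]
      refine ⟨Finset.mem_image.mpr ⟨fun i => (⟨b i, Nat.lt_succ_of_le (hbound i)⟩ : Fin (N + 1)),
        Finset.mem_univ _, rfl⟩, hwψ⟩
    have hmax := hbsmax b hbS
    calc ∑ i, (1 - β i ^ searchCount1D i ψ) * p i
        = ∑ i, (1 - β i ^ (b i)) * p i := rfl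
      _ ≤ ∑ i, (1 - β i ^ (bs i)) * p i := hmax
      _ = ∑ i, (1 - β i ^ searchCount1D i (sched bs (supp bs))) * p i := by
          refine Finset.sum_congr rfl (fun i _ => ?_)
          rw [hcount i]
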